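/- Let C ⊆ F_{q^2}^n be an additive code generated (over F_q) by matrix G, C' generated by G', E ⊆ F_{q^2}^m generated by matrix E_0, and suppose the juxtaposed code M ⊆ F_{q^2}^{n+m} is generated by the block matrix [[G, 0],[G', E_0]]. If C is trace self-orthogonal and the code generated by (G' | E_0) is trace ACD and trace-orthogonal to (G | 0), then M decomposes as M = R_t(M) ⊕ M_e with R_t(M) = {(c,0) : c ∈ C} and M_e the code generated by (G' | E_0). -/
import Mathlib


/-- The trace form `(u,v)_t = Σ_j tr(u_j · conj(v_j))` on `F_{q^2}^n`, where
`conj = σ` is the conjugation of `F_{q^2}/F_q` and `tr(x) = x + σ x`. -/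
def tformC {F K : Type*} [Field F] [Field K] [Algebra F K] (σ : K →ₐ[F] K) {n : ℕ}
    (u v : Fin n → K) : K :=
  ∑ j, (u j * σ (v j) + σ (u j * σ (v j)))

/-- The trace dual `C^{⊥t}` of an additive (`F_q`-linear) code `C ⊆ F_{q^2}^n`. -/
def traceDual {F K : Type*} [Field F] [Field K] [Algebra F K] (σ : K →ₐ[F] K) {n : ℕ}
    (C : Submodule F (Fin n → K)) : Submodule F (Fin n → K) where
  carrier := {u | ∀ v ∈ C, tformC σ u v = 0}
  add_mem' := by
    intro a b ha hb v hv
    have h : tformC σ (a + b) v = tformC σ a v + tformC σ b v := by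
      simp only [tformC, Pi.add_apply, add_mul, map_add]
      rw [← Finset.sum_add_distrib]
      exact Finset.sum_congr rfl (fun j _ => by ring)
    rw [h, ha v hv, hb v hv, add_zero]
  zero_mem' := by
    intro v hv
    simp [tformC]
  smul_mem' := by
    intro c a ha v hv
    have h : tformC σ (c • a) v = c • tformC σ a v := by
      simp only [tformC, Pi.smul_apply, Algebra.smul_def, map_mul, AlgHom.commutes]
      rw [Finset.mul_sum]
      exact Finset.sum_congr rfl (fun j _ => by ring)
    rw [h, ha v hv, smul_zero]

/-- The trace form on the juxtaposition `F_{q^2}^n × F_{q^2}^m`: sum of the trace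
forms on the two blocks. -/
def tformC2 {F K : Type*} [Field F] [Field K] [Algebra F K] (σ : K →ₐ[F] K) {n m : ℕ}
    (u v : (Fin n → K) × (Fin m → K)) : K :=
  tformC σ u.1 v.1 + tformC σ u.2 v.2

lemma tformC_symm {F K : Type*} [Field F] [Field K] [Algebra F K] (σ : K →ₐ[F] K)
    (hσ : ∀ x, σ (σ x) = x) {n : ℕ} (u v : Fin n → K) :
    tformC σ u v = tformC σ v u := by
  unfold tformC
  refine Finset.sum_congr rfl (fun j _ => ?_)
  simp only [map_mul, hσ]
  ring

lemma tformC_add_left {F K : Type*} [Field F] [Field K] [Algebra F K] (σ : K →ₐ[F] K)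
    {n : ℕ} (a b v : Fin n → K) :
    tformC σ (a + b) v = tformC σ a v + tformC σ b v := by
  simp only [tformC, Pi.add_apply, add_mul, map_add]
  rw [← Finset.sum_add_distrib]
  exact Finset.sum_congr rfl (fun j _ => by ring)

lemma tformC2_add_left {F K : Type*} [Field F] [Field K] [Algebra F K] (σ : K →ₐ[F] K)
    {n m : ℕ} (a b v : (Fin n → K) × (Fin m → K)) :
    tformC2 σ (a + b) v = tformC2 σ a v + tformC2 σ b v := by
  simp only [tformC2, Prod.fst_add, Prod.snd_add, tformC_add_left]
  ring

lemma tformC2_symm {F K : Type*} [Field F] [Field K] [Algebra F K] (σ : K →ₐ[F] K)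
    (hσ : ∀ x, σ (σ x) = x) {n m : ℕ} (u v : (Fin n → K) × (Fin m → K)) :
    tformC2 σ u v = tformC2 σ v u := by
  simp only [tformC2, tformC_symm σ hσ]

/-- Juxtaposed-code decomposition: if `C ⊆ F_{q^2}^n` is trace self-orthogonal,
`W ⊆ F_{q^2}^{n+m}` (the code generated by `(G'|E_0)`) is trace ACD and
trace-orthogonal to `(G|0)` (i.e. to `C × {0}`), then the code
`M = (C × {0}) + W` generated by the block matrix `[[G,0],[G',E_0]]` satisfies
`M = R_t(M) ⊕ M_e` with `R_t(M) = C × {0}` and `M_e = W`. -/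
theorem juxtaposed_decomposition (F K : Type*) [Field F] [Fintype F] [Field K]
    [Algebra F K] (σ : K →ₐ[F] K) (hσ : ∀ x, σ (σ x) = x) (n m : ℕ)
    (C : Submodule F (Fin n → K))
    (W : Submodule F ((Fin n → K) × (Fin m → K)))
    (M : Submodule F ((Fin n → K) × (Fin m → K)))
    (hM : M = (Submodule.prod C (⊥ : Submodule F (Fin m → K))) ⊔ W)
    (hCso : ∀ u ∈ C, ∀ v ∈ C, tformC σ u v = 0)
    (hWacd : ∀ w ∈ W, (∀ w' ∈ W, tformC2 σ w w' = 0) → w = 0)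
    (hWC : ∀ w ∈ W, ∀ c ∈ C, tformC2 σ w (c, 0) = 0) :
    ({v ∈ (M : Set ((Fin n → K) × (Fin m → K))) | ∀ w ∈ M, tformC2 σ v w = 0}
        = (Submodule.prod C (⊥ : Submodule F (Fin m → K)) :
            Set ((Fin n → K) × (Fin m → K)))) ∧
    Disjoint (Submodule.prod C (⊥ : Submodule F (Fin m → K))) W ∧
    (Submodule.prod C (⊥ : Submodule F (Fin m → K))) ⊔ W = M := by
  set P := Submodule.prod C (⊥ : Submodule F (Fin m → K)) with hP
  -- P ⊥ W (both directions)
  have hPW : ∀ p ∈ P, ∀ w ∈ W, tformC2 σ p w = 0 := by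
    rintro ⟨c, z⟩ hp w hw
    obtain ⟨hc, hz⟩ := hp
    have hz0 : z = 0 := hz
    subst hz0
    rw [tformC2_symm σ hσ]
    exact hWC w hw c hc
  have hPP : ∀ p ∈ P, ∀ p' ∈ P, tformC2 σ p p' = 0 := by
    rintro ⟨c, z⟩ hp ⟨c', z'⟩ hp'
    obtain ⟨hc, hz⟩ := hp
    obtain ⟨hc', hz'⟩ := hp'
    have hz0 : z = 0 := hz
    have hz0' : z' = 0 := hz'
    subst hz0; subst hz0'
    simp only [tformC2]
    rw [hCso c hc c' hc']
    simp [tformC]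
  -- any element of M orthogonal to P and W
  have hPM : ∀ p ∈ P, ∀ w ∈ M, tformC2 σ p w = 0 := by
    intro p hp w hw
    rw [hM] at hw
    obtain ⟨x, hx, y, hy, rfl⟩ := Submodule.mem_sup.mp hw
    rw [tformC2_symm σ hσ, tformC2_add_left, tformC2_symm σ hσ x p,
      tformC2_symm σ hσ y p, hPP p hp x hx, hPW p hp y hy, add_zero]
  refine ⟨?_, ?_, hM.symm⟩
  · ext v
    simp only [Set.mem_setOf_eq, SetLike.mem_coe]
    constructor
    · rintro ⟨hvM, hv⟩
      rw [hM] at hvM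
      obtain ⟨x, hx, y, hy, rfl⟩ := Submodule.mem_sup.mp hvM
      have hy0 : y = 0 := by
        refine hWacd y hy (fun w' hw' => ?_)
        have h1 : tformC2 σ (x + y) w' = 0 := by
          refine hv w' ?_
          rw [hM]; exact Submodule.mem_sup_right hw'
        rw [tformC2_add_left, hPW x hx w' hw'] at h1
        rwa [zero_add] at h1
      rw [hy0, add_zero]; exact hx
    · intro hv
      refine ⟨by rw [hM]; exact Submodule.mem_sup_left hv, fun w hw => hPM v hv w hw⟩
  · rw [Submodule.disjoint_def]
    intro x hxP hxW
    refine hWacd x hxW (fun w' hw' => hPW x hxP w' hw')
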